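/- arXiv:1407.3335 — 2 statements merged into one kernel-verified Lean document; each statement's English description precedes it below -/
import Mathlib

section
/- Let L be an n×n real matrix with L·1 = 0 and let w ∈ ℝⁿ satisfy wᵀL = 0, wᵀ1 = 1. Suppose exp(-Lt) → 1wᵀ as t → ∞ and (I - hL)ᵏ → 1wᵀ as k → ∞. Then for any sequences t_c(m) ≥ 0 of reals and t_d(m) ≥ 0 of integers with t_c(m) + t_d(m) → ∞, the product exp(-L t_c(m))·(I - hL)^{t_d(m)} converges to 1wᵀ. Consequently the switched system converges to consensus at value wᵀx(0) from any initial state x(0). -/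
open Matrix Filter

attribute [local instance] Matrix.linftyOpNormedAddCommGroup Matrix.linftyOpSemiNormedRing
  Matrix.linftyOpNormedRing Matrix.linftyOpNormedAlgebra

/-- If `L·1 = 0`, `wᵀL = 0`, `wᵀ1 = 1`, `exp(-Lt) → 1wᵀ` and `(I - hL)ᵏ → 1wᵀ`,
then for any sequences `t_c(m) ≥ 0` (real) and `t_d(m)` (natural) with
`t_c(m) + t_d(m) → ∞`, `exp(-L t_c(m))·(I - hL)^{t_d(m)} → 1wᵀ`; consequently the
switched system converges to consensus at value `wᵀx(0)` from any initial state. -/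
theorem stmt_10 (n : ℕ) (L : Matrix (Fin n) (Fin n) ℝ) (w : Fin n → ℝ) (h : ℝ)
    (hL1 : L *ᵥ (fun _ => (1 : ℝ)) = 0)
    (hwL : w ᵥ* L = 0)
    (hw1 : w ⬝ᵥ (fun _ => (1 : ℝ)) = 1)
    (P : Matrix (Fin n) (Fin n) ℝ)
    (hP : P = Matrix.vecMulVec (fun _ => (1 : ℝ)) w)
    (hct : Tendsto (fun t : ℝ => NormedSpace.exp (-(t • L))) atTop (nhds P))
    (hdt : Tendsto (fun k : ℕ => ((1 : Matrix (Fin n) (Fin n) ℝ) - h • L) ^ k)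
      atTop (nhds P))
    (tc : ℕ → ℝ) (htc : ∀ m, 0 ≤ tc m) (td : ℕ → ℕ)
    (htot : Tendsto (fun m => tc m + (td m : ℝ)) atTop atTop) :
    Tendsto (fun m => NormedSpace.exp (-(tc m • L)) *
        ((1 : Matrix (Fin n) (Fin n) ℝ) - h • L) ^ (td m)) atTop (nhds P) ∧
    ∀ x0 : Fin n → ℝ,
      Tendsto (fun m => (NormedSpace.exp (-(tc m • L)) *
          ((1 : Matrix (Fin n) (Fin n) ℝ) - h • L) ^ (td m)) *ᵥ x0)
        atTop (nhds (fun _ => w ⬝ᵥ x0)) := by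
  set E : ℝ → Matrix (Fin n) (Fin n) ℝ := fun t => NormedSpace.exp (-(t • L)) with hEdef
  set D : ℕ → Matrix (Fin n) (Fin n) ℝ := fun k => ((1 : Matrix (Fin n) (Fin n) ℝ) - h • L) ^ k
    with hDdef
  -- E is a one-parameter semigroup
  have hE : ∀ s u : ℝ, E s * E u = E (s + u) := by
    intro s u
    rw [hEdef]
    simp only
    rw [← Matrix.exp_add_of_commute]
    · congr 1; module
    · exact (((Commute.refl L).smul_left s).smul_right u).neg_left.neg_right
  -- E t * P = P
  have hEP : ∀ t : ℝ, E t * P = P := by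
    intro t
    have h1 : Tendsto (fun s : ℝ => E t * E s) atTop (nhds (E t * P)) := hct.const_mul _
    have h2 : Tendsto (fun s : ℝ => E t * E s) atTop (nhds P) := by
      simp_rw [hE t]
      exact hct.comp (tendsto_atTop_add_const_left atTop t tendsto_id)
    exact tendsto_nhds_unique h1 h2
  -- P * D k = P
  have hPD : ∀ k : ℕ, P * D k = P := by
    intro k
    have h1 : Tendsto (fun j : ℕ => D j * D k) atTop (nhds (P * D k)) := hdt.mul_const _
    have h2 : Tendsto (fun j : ℕ => D j * D k) atTop (nhds P) := by
      have hDadd : ∀ j : ℕ, D j * D k = D (j + k) := fun j => (pow_add _ j k).symm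
      simp_rw [hDadd]
      exact hdt.comp (tendsto_add_atTop_nat k)
    exact tendsto_nhds_unique h1 h2
  -- P * P = P
  have hPP : P * P = P := by
    have h1 : Tendsto (fun t : ℝ => E t * P) atTop (nhds (P * P)) := hct.mul_const _
    have h2 : Tendsto (fun t : ℝ => E t * P) atTop (nhds P) := by
      simp_rw [hEP]; exact tendsto_const_nhds
    exact tendsto_nhds_unique h1 h2
  -- key identity
  have hid : ∀ (t : ℝ) (k : ℕ), (E t - P) * (D k - P) = E t * D k - P := by
    intro t k
    rw [sub_mul, mul_sub, mul_sub, hEP, hPD, hPP]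
    abel
  -- norm tendsto facts
  have hEtend : Tendsto (fun t : ℝ => ‖E t - P‖) atTop (nhds 0) := by
    have := hct.sub (tendsto_const_nhds (x := P))
    rw [sub_self] at this
    exact (tendsto_zero_iff_norm_tendsto_zero.mp this)
  have hDtend : Tendsto (fun k : ℕ => ‖D k - P‖) atTop (nhds 0) := by
    have := hdt.sub (tendsto_const_nhds (x := P))
    rw [sub_self] at this
    exact (tendsto_zero_iff_norm_tendsto_zero.mp this)
  -- global bound for D
  obtain ⟨C₂, hC₂⟩ : ∃ C₂, ∀ k : ℕ, ‖D k - P‖ ≤ C₂ := by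
    obtain ⟨C₂, hC₂⟩ := hDtend.bddAbove_range
    exact ⟨C₂, fun k => hC₂ ⟨k, rfl⟩⟩
  -- global bound for E on [0, ∞)
  have contE : Continuous E := by
    have : Continuous fun t : ℝ => -(t • L) := by continuity
    exact NormedSpace.exp_continuous.comp this
  obtain ⟨T₀, hT₀⟩ : ∃ T₀ : ℝ, ∀ t ≥ T₀, ‖E t - P‖ ≤ 1 := by
    have := (hEtend.eventually (eventually_le_nhds (by norm_num : (0:ℝ) < 1))).and
      (eventually_ge_atTop (0 : ℝ))
    rw [eventually_atTop] at this
    obtain ⟨T₀, hT₀⟩ := this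
    exact ⟨T₀, fun t ht => (hT₀ t ht).1⟩
  obtain ⟨BE, hBE⟩ : ∃ BE, ∀ t : ℝ, 0 ≤ t → ‖E t - P‖ ≤ BE := by
    set T := max T₀ 0 with hT
    have hcomp : IsCompact (Set.Icc (0:ℝ) T) := isCompact_Icc
    have hne : (Set.Icc (0:ℝ) T).Nonempty := ⟨0, by simp [hT, le_max_right]⟩
    obtain ⟨t₀, -, ht₀⟩ := hcomp.exists_isMaxOn hne
      ((continuous_norm.comp (contE.sub continuous_const)).continuousOn)
    refine ⟨max ‖E t₀ - P‖ 1, fun t ht => ?_⟩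
    rcases le_total t T with h' | h'
    · exact le_max_of_le_left (ht₀ ⟨ht, h'⟩)
    · exact le_max_of_le_right (hT₀ t (le_trans (le_max_left _ _) h'))
  set C : ℝ := max BE C₂ + 1 with hCdef
  have hBEC : BE < C := by rw [hCdef]; have := le_max_left BE C₂; linarith
  have hC₂C : C₂ < C := by rw [hCdef]; have := le_max_right BE C₂; linarith
  have hCpos : 0 < C := by
    have h0 : (0:ℝ) ≤ ‖E 0 - P‖ := norm_nonneg _
    have := hBE 0 le_rfl
    linarith
  -- main convergence
  have key : Tendsto (fun m => E (tc m) * D (td m)) atTop (nhds P) := by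
    rw [← tendsto_sub_nhds_zero_iff]
    refine NormedAddCommGroup.tendsto_nhds_zero.mpr ?_
    intro ε hε
    have hδ : 0 < ε / C := div_pos hε hCpos
    obtain ⟨T₁, hT₁⟩ : ∃ T₁ : ℝ, ∀ t ≥ T₁, ‖E t - P‖ < ε / C := by
      have := (hEtend.eventually (eventually_lt_nhds hδ))
      rw [eventually_atTop] at this; exact this
    obtain ⟨K₁, hK₁⟩ : ∃ K₁ : ℕ, ∀ k ≥ K₁, ‖D k - P‖ < ε / C := by
      have := (hDtend.eventually (eventually_lt_nhds hδ))
      rw [eventually_atTop] at this; exact this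
    have hev : ∀ᶠ m in atTop, max T₁ 0 + (K₁ : ℝ) ≤ tc m + (td m : ℝ) :=
      htot.eventually_ge_atTop _
    filter_upwards [hev] with m hm
    rw [← hid]
    have hnorm := norm_mul_le (E (tc m) - P) (D (td m) - P)
    by_cases hcase : T₁ ≤ tc m
    · have h1 : ‖E (tc m) - P‖ < ε / C := hT₁ _ hcase
      have h2 : ‖D (td m) - P‖ ≤ C := le_of_lt (lt_of_le_of_lt (hC₂ _) hC₂C)
      have h3 : (0:ℝ) ≤ ‖E (tc m) - P‖ := norm_nonneg _
      have h4 : (0:ℝ) ≤ ‖D (td m) - P‖ := norm_nonneg _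
      have : ‖E (tc m) - P‖ * ‖D (td m) - P‖ < (ε / C) * C := by
        rcases eq_or_lt_of_le h4 with h4' | h4'
        · rw [← h4']; simp; positivity
        · calc ‖E (tc m) - P‖ * ‖D (td m) - P‖ < (ε / C) * ‖D (td m) - P‖ :=
                (mul_lt_mul_of_pos_right h1 h4')
            _ ≤ (ε / C) * C := mul_le_mul_of_nonneg_left h2 (le_of_lt hδ)
      rw [div_mul_cancel₀ ε (ne_of_gt hCpos)] at this
      exact lt_of_le_of_lt hnorm this
    · push_neg at hcase
      have htd : K₁ ≤ td m := by
        by_contra hlt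
        push_neg at hlt
        have : (td m : ℝ) < (K₁ : ℝ) := by exact_mod_cast hlt
        have h5 : tc m < max T₁ 0 := lt_of_lt_of_le hcase (le_max_left _ _)
        linarith
      have h1 : ‖D (td m) - P‖ < ε / C := hK₁ _ htd
      have h2 : ‖E (tc m) - P‖ ≤ C := le_of_lt (lt_of_le_of_lt (hBE _ (htc m)) hBEC)
      have h3 : (0:ℝ) ≤ ‖E (tc m) - P‖ := norm_nonneg _
      have : ‖E (tc m) - P‖ * ‖D (td m) - P‖ < C * (ε / C) := by
        calc ‖E (tc m) - P‖ * ‖D (td m) - P‖ ≤ C * ‖D (td m) - P‖ :=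
              mul_le_mul_of_nonneg_right h2 (norm_nonneg _)
          _ < C * (ε / C) := mul_lt_mul_of_pos_left h1 hCpos
      rw [mul_div_cancel₀ ε (ne_of_gt hCpos)] at this
      exact lt_of_le_of_lt hnorm this
  refine ⟨key, fun x0 => ?_⟩
  have hmv : Tendsto (fun m => (E (tc m) * D (td m)) *ᵥ x0) atTop (nhds (P *ᵥ x0)) := by
    have hco : Continuous fun A : Matrix (Fin n) (Fin n) ℝ => A *ᵥ x0 :=
      continuous_id.matrix_mulVec continuous_const
    exact (hco.tendsto P).comp key
  have hPx : P *ᵥ x0 = fun _ => w ⬝ᵥ x0 := by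
    funext i
    simp [hP, Matrix.mulVec, Matrix.vecMulVec_apply, dotProduct]
  rw [← hPx]
  exact hmv
end

section
/- Let f : ℝ → ℝ be odd with f(x) = 0 iff x = 0, and γ₁x ≤ f(x) ≤ γ₂x for all x > 0 where 0 < γ₁ < γ₂. Let L be the Laplacian of a connected undirected weighted graph with adjacency a_ij = a_ji. Then for any x ∈ ℝⁿ with δ = x - ((1/n)1ᵀx)1, the nonlinear drift term satisfies Σᵢ δᵢ · Σⱼ a_ij f(xⱼ - xᵢ) = -(1/2)Σ_{i,j} a_ij (xⱼ - xᵢ) f(xⱼ - xᵢ) ≤ -γ₁ δᵀLδ ≤ -γ₁λ₂ δᵀδ. -/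
open Matrix

/-- Nonlinear drift estimate: for `f` odd, vanishing only at `0`, sector-bounded
(`γ₁x ≤ f(x) ≤ γ₂x` for `x > 0`, `0 < γ₁ < γ₂`), and `L` the Laplacian of a connected
undirected weighted graph with adjacency `A` and algebraic connectivity `λ₂`, for any
`x ∈ ℝⁿ` with `δ = x - ((1/n)1ᵀx)·1`:
`∑ᵢ δᵢ ∑ⱼ a_ij f(xⱼ - xᵢ) = -(1/2)∑_{i,j} a_ij (xⱼ - xᵢ) f(xⱼ - xᵢ)
  ≤ -γ₁ δᵀLδ ≤ -γ₁λ₂ δᵀδ`. -/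
theorem stmt_15 (n : ℕ) (hn : 0 < n)
    (f : ℝ → ℝ) (hodd : ∀ x : ℝ, f (-x) = -f x)
    (hzero : ∀ x : ℝ, f x = 0 ↔ x = 0)
    (γ₁ γ₂ : ℝ) (hγ : 0 < γ₁ ∧ γ₁ < γ₂)
    (hsector : ∀ x : ℝ, 0 < x → γ₁ * x ≤ f x ∧ f x ≤ γ₂ * x)
    (A : Matrix (Fin n) (Fin n) ℝ)
    (hAsym : ∀ i j, A i j = A j i) (hAnonneg : ∀ i j, 0 ≤ A i j)
    (hAdiag : ∀ i, A i i = 0)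
    (L : Matrix (Fin n) (Fin n) ℝ)
    (hL : L = Matrix.diagonal (fun i => ∑ j, A i j) - A)
    (hker : ∀ v : Fin n → ℝ, L *ᵥ v = 0 → ∃ c : ℝ, v = fun _ => c)
    (lam2 : ℝ) (hlam2pos : 0 < lam2)
    (heig2 : ∃ v : Fin n → ℝ, v ≠ 0 ∧ L *ᵥ v = lam2 • v)
    (hmin : ∀ μ : ℝ, 0 < μ → (∃ v : Fin n → ℝ, v ≠ 0 ∧ L *ᵥ v = μ • v) → lam2 ≤ μ)
    (x : Fin n → ℝ) (δ : Fin n → ℝ)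
    (hδ : δ = x - (fun _ => (1 / (n : ℝ)) * ((fun _ => (1 : ℝ)) ⬝ᵥ x))) :
    (∑ i, δ i * ∑ j, A i j * f (x j - x i) =
      -(1 / 2) * ∑ i, ∑ j, A i j * (x j - x i) * f (x j - x i)) ∧
    (-(1 / 2) * ∑ i, ∑ j, A i j * (x j - x i) * f (x j - x i) ≤
      -γ₁ * (δ ⬝ᵥ (L *ᵥ δ))) ∧
    (-γ₁ * (δ ⬝ᵥ (L *ᵥ δ)) ≤ -γ₁ * lam2 * (δ ⬝ᵥ δ)) := by
  obtain ⟨hγ1, _⟩ := hγ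
  have hnR : (n : ℝ) ≠ 0 := Nat.cast_ne_zero.mpr hn.ne'
  -- δ differs from x by a constant
  have hδdiff : ∀ i j : Fin n, δ j - δ i = x j - x i := by
    intro i j; rw [hδ]; simp
  -- sum of δ is zero
  have hsum : ∑ i, δ i = 0 := by
    rw [hδ]
    simp only [Pi.sub_apply, Finset.sum_sub_distrib, Finset.sum_const, Finset.card_univ,
      Fintype.card_fin, nsmul_eq_mul, dotProduct, one_mul]
    field_simp
    ring
  -- sector bound for all reals
  have hsec : ∀ y : ℝ, γ₁ * y ^ 2 ≤ y * f y := by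
    intro y
    rcases lt_trichotomy y 0 with hy | hy | hy
    · have h := (hsector (-y) (by linarith)).1
      have h2 : f (-y) = -f y := hodd y
      nlinarith [h]
    · simp [hy, (hzero 0).mpr rfl]
    · nlinarith [(hsector y hy).1]
  have hLij : ∀ i j, L i j = (if i = j then ∑ k, A i k else 0) - A i j := by
    intro i j; rw [hL]; simp [Matrix.diagonal_apply]
  -- quadratic form of L
  have hquad : ∀ v : Fin n → ℝ, v ⬝ᵥ (L *ᵥ v) = (1/2) * ∑ i, ∑ j, A i j * (v j - v i)^2 := by
    intro v
    have hswap : ∑ i, ∑ j, A i j * (v j)^2 = ∑ i, ∑ j, A i j * (v i)^2 := by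
      rw [Finset.sum_comm]
      exact Finset.sum_congr rfl fun i _ => Finset.sum_congr rfl fun j _ => by rw [hAsym]
    have e1 : ∀ i, ∑ j, v i * (L i j * v j)
        = (∑ j, A i j * (v i)^2) - ∑ j, A i j * (v i * v j) := by
      intro i
      simp only [hLij, sub_mul, mul_sub]
      rw [Finset.sum_sub_distrib]
      congr 1
      · rw [Finset.sum_eq_single i]
        · rw [if_pos rfl, Finset.sum_mul, Finset.mul_sum]
          exact Finset.sum_congr rfl fun j _ => by ring
        · intro j _ hj; simp [Ne.symm hj]
        · simp
      · exact Finset.sum_congr rfl fun j _ => by ring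
    have hq : v ⬝ᵥ (L *ᵥ v) = ∑ i, ((∑ j, A i j * (v i)^2) - ∑ j, A i j * (v i * v j)) := by
      simp only [dotProduct, mulVec, Finset.mul_sum]
      exact Finset.sum_congr rfl fun i _ => e1 i
    rw [hq, Finset.mul_sum]
    rw [Finset.sum_sub_distrib]
    have expand : ∑ i, (1/2 : ℝ) * ∑ j, A i j * (v j - v i)^2
        = (1/2) * (∑ i, ∑ j, A i j * (v j)^2) + (1/2) * (∑ i, ∑ j, A i j * (v i)^2)
          - ∑ i, ∑ j, A i j * (v i * v j) := by
      rw [← Finset.mul_sum]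
      have : ∑ i, ∑ j, A i j * (v j - v i)^2
          = (∑ i, ∑ j, A i j * (v j)^2) + (∑ i, ∑ j, A i j * (v i)^2)
            - 2 * ∑ i, ∑ j, A i j * (v i * v j) := by
        rw [← Finset.sum_add_distrib, Finset.mul_sum, ← Finset.sum_sub_distrib]
        refine Finset.sum_congr rfl fun i _ => ?_
        rw [← Finset.sum_add_distrib, Finset.mul_sum, ← Finset.sum_sub_distrib]
        exact Finset.sum_congr rfl fun j _ => by ring
      rw [this]; ring
    rw [expand, hswap]
    ring
  -- nonnegativity of the quadratic form
  have hquad_nonneg : ∀ v : Fin n → ℝ, 0 ≤ v ⬝ᵥ (L *ᵥ v) := by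
    intro v
    rw [hquad v]
    have : 0 ≤ ∑ i, ∑ j, A i j * (v j - v i)^2 :=
      Finset.sum_nonneg fun i _ => Finset.sum_nonneg fun j _ =>
        mul_nonneg (hAnonneg i j) (sq_nonneg _)
    linarith
  -- Part 1
  have part1 : ∑ i, δ i * ∑ j, A i j * f (x j - x i) =
      -(1 / 2) * ∑ i, ∑ j, A i j * (x j - x i) * f (x j - x i) := by
    have h1 : ∑ i, δ i * ∑ j, A i j * f (x j - x i)
        = ∑ i, ∑ j, A i j * δ i * f (x j - x i) := by
      refine Finset.sum_congr rfl fun i _ => ?_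
      rw [Finset.mul_sum]
      exact Finset.sum_congr rfl fun j _ => by ring
    have h2 : ∑ i, ∑ j, A i j * δ i * f (x j - x i)
        = ∑ i, ∑ j, A i j * (-δ j) * f (x j - x i) := by
      rw [Finset.sum_comm]
      refine Finset.sum_congr rfl fun i _ => Finset.sum_congr rfl fun j _ => ?_
      have : f (x i - x j) = - f (x j - x i) := by
        rw [show x i - x j = -(x j - x i) by ring, hodd]
      rw [hAsym j i, this]; ring
    have h3 : (2 : ℝ) * ∑ i, ∑ j, A i j * δ i * f (x j - x i)
        = - ∑ i, ∑ j, A i j * (x j - x i) * f (x j - x i) := by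
      have := h2
      have hh : ∑ i, ∑ j, A i j * δ i * f (x j - x i)
            + ∑ i, ∑ j, A i j * (-δ j) * f (x j - x i)
          = ∑ i, ∑ j, A i j * (δ i - δ j) * f (x j - x i) := by
        rw [← Finset.sum_add_distrib]
        refine Finset.sum_congr rfl fun i _ => ?_
        rw [← Finset.sum_add_distrib]
        exact Finset.sum_congr rfl fun j _ => by ring
      have hd : ∑ i, ∑ j, A i j * (δ i - δ j) * f (x j - x i)
          = - ∑ i, ∑ j, A i j * (x j - x i) * f (x j - x i) := by
        rw [← Finset.sum_neg_distrib]
        refine Finset.sum_congr rfl fun i _ => ?_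
        rw [← Finset.sum_neg_distrib]
        refine Finset.sum_congr rfl fun j _ => ?_
        have : δ i - δ j = -(x j - x i) := by rw [← hδdiff i j]; ring
        rw [this]; ring
      linarith [hh, hd, h2.symm ▸ hh]
    rw [h1]
    linarith [h3]
  refine ⟨part1, ?_, ?_⟩
  -- Part 2
  · have hxδ : ∀ i j : Fin n, x j - x i = δ j - δ i := fun i j => (hδdiff i j).symm
    have hbound : ∑ i, ∑ j, γ₁ * (A i j * (x j - x i)^2)
        ≤ ∑ i, ∑ j, A i j * (x j - x i) * f (x j - x i) := by
      refine Finset.sum_le_sum fun i _ => Finset.sum_le_sum fun j _ => ?_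
      have h := hsec (x j - x i)
      have hA := hAnonneg i j
      nlinarith
    have hq : δ ⬝ᵥ (L *ᵥ δ) = (1/2) * ∑ i, ∑ j, A i j * (x j - x i)^2 := by
      rw [hquad δ]
      congr 1
      exact Finset.sum_congr rfl fun i _ => Finset.sum_congr rfl fun j _ => by
        rw [hδdiff i j]
    have hfac : ∑ i, ∑ j, γ₁ * (A i j * (x j - x i)^2)
        = γ₁ * ∑ i, ∑ j, A i j * (x j - x i)^2 := by
      rw [Finset.mul_sum]
      exact Finset.sum_congr rfl fun i _ => by rw [Finset.mul_sum]
    rw [hq]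
    rw [hfac] at hbound
    linarith
  -- Part 3: spectral estimate
  · have hH : L.IsHermitian := by
      rw [hL]
      ext i j
      simp only [conjTranspose_apply, Matrix.sub_apply, star_trivial, Matrix.diagonal_apply]
      rw [hAsym j i]
      by_cases h : i = j <;> simp [h, eq_comm]
    set u : Fin n → Fin n → ℝ := fun k => ⇑(hH.eigenvectorBasis k) with hu
    set μ : Fin n → ℝ := hH.eigenvalues with hμ
    have heig : ∀ k, L *ᵥ u k = μ k • u k := fun k => hH.mulVec_eigenvectorBasis k
    have horth : ∀ k l, u k ⬝ᵥ u l = if k = l then 1 else 0 := by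
      intro k l
      have h := orthonormal_iff_ite.mp hH.eigenvectorBasis.orthonormal k l
      simp [PiLp.inner_apply, dotProduct] at h
      exact Eq.trans (Finset.sum_congr rfl fun i _ => mul_comm (u k i) (u l i)) h
    set c : Fin n → ℝ := fun k => u k ⬝ᵥ δ with hc
    have hrepr : ∀ i, δ i = ∑ k, c k * u k i := by
      intro i
      have h := hH.eigenvectorBasis.sum_repr' (WithLp.toLp 2 δ)
      conv_lhs => rw [show δ = WithLp.ofLp (WithLp.toLp 2 δ) from rfl, ← h]
      rw [WithLp.ofLp_sum, Finset.sum_apply i Finset.univ _]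
      simp [PiLp.inner_apply, dotProduct, PiLp.smul_apply, hc, hu]
      exact Finset.sum_congr rfl fun k _ => by rw [Finset.sum_congr rfl fun j _ => mul_comm (δ j) _]
    -- δ ⬝ᵥ δ = ∑ c²
    have hcc : ∀ k, (∑ i, u k i * δ i) = c k := fun k => rfl
    have hdd : δ ⬝ᵥ δ = ∑ k, c k ^ 2 := by
      calc δ ⬝ᵥ δ = ∑ i, δ i * δ i := rfl
        _ = ∑ i, (∑ k, c k * u k i) * δ i := by
            exact Finset.sum_congr rfl fun i _ => by rw [← hrepr i]
        _ = ∑ i, ∑ k, c k * (u k i * δ i) := by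
            refine Finset.sum_congr rfl fun i _ => ?_
            rw [Finset.sum_mul]
            exact Finset.sum_congr rfl fun k _ => by ring
        _ = ∑ k, c k * ∑ i, u k i * δ i := by
            rw [Finset.sum_comm]
            exact Finset.sum_congr rfl fun k _ => by rw [Finset.mul_sum]
        _ = ∑ k, c k ^ 2 := Finset.sum_congr rfl fun k _ => by rw [hcc k]; ring
    have hLu : ∀ i, (L *ᵥ δ) i = ∑ k, c k * (μ k * u k i) := by
      intro i
      have : (L *ᵥ δ) i = ∑ j, L i j * δ j := rfl
      rw [this]
      calc ∑ j, L i j * δ j = ∑ j, L i j * ∑ k, c k * u k j := by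
            exact Finset.sum_congr rfl fun j _ => by rw [← hrepr j]
        _ = ∑ j, ∑ k, c k * (L i j * u k j) := by
            refine Finset.sum_congr rfl fun j _ => ?_
            rw [Finset.mul_sum]
            exact Finset.sum_congr rfl fun k _ => by ring
        _ = ∑ k, c k * ∑ j, L i j * u k j := by
            rw [Finset.sum_comm]
            exact Finset.sum_congr rfl fun k _ => by rw [Finset.mul_sum]
        _ = ∑ k, c k * (μ k * u k i) := by
            refine Finset.sum_congr rfl fun k _ => ?_
            have : (∑ j, L i j * u k j) = (L *ᵥ u k) i := rfl
            rw [this, heig k]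
            simp
    have hdL : δ ⬝ᵥ (L *ᵥ δ) = ∑ k, μ k * c k ^ 2 := by
      calc δ ⬝ᵥ (L *ᵥ δ) = ∑ i, δ i * (L *ᵥ δ) i := rfl
        _ = ∑ i, ∑ k, c k * μ k * (u k i * δ i) := by
            refine Finset.sum_congr rfl fun i _ => ?_
            rw [hLu i, Finset.mul_sum]
            exact Finset.sum_congr rfl fun k _ => by ring
        _ = ∑ k, c k * μ k * ∑ i, u k i * δ i := by
            rw [Finset.sum_comm]
            exact Finset.sum_congr rfl fun k _ => by rw [Finset.mul_sum]
        _ = ∑ k, μ k * c k ^ 2 := Finset.sum_congr rfl fun k _ => by rw [hcc k]; ring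
    -- each eigenvalue with nonzero coefficient is ≥ lam2
    have hkey : ∀ k, lam2 * c k ^ 2 ≤ μ k * c k ^ 2 := by
      intro k
      by_cases hck : c k = 0
      · simp [hck]
      · have hune : u k ≠ 0 := by
          intro h0
          apply hck
          rw [hc]
          simp only [h0]
          simp [dotProduct]
        have hμnonneg : 0 ≤ μ k := by
          have h1 : u k ⬝ᵥ (L *ᵥ u k) = μ k * (u k ⬝ᵥ u k) := by
            rw [heig k]
            simp [dotProduct, Finset.mul_sum]
            exact Finset.sum_congr rfl fun i _ => by ring
          have h2 : u k ⬝ᵥ u k = 1 := by rw [horth k k]; simp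
          have h3 := hquad_nonneg (u k)
          rw [h1, h2, mul_one] at h3
          exact h3
        have hμpos : 0 < μ k := by
          rcases hμnonneg.lt_or_eq with h | h
          · exact h
          · exfalso
            have hLk : L *ᵥ u k = 0 := by rw [heig k, ← h]; simp
            obtain ⟨d, hd⟩ := hker (u k) hLk
            have hdne : d ≠ 0 := by
              intro h0; apply hune; rw [hd, h0]; rfl
            apply hck
            show u k ⬝ᵥ δ = 0
            have : u k ⬝ᵥ δ = d * ∑ i, δ i := by
              rw [hd]
              simp [dotProduct, Finset.mul_sum]
            rw [this, hsum, mul_zero]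
        have := hmin (μ k) hμpos ⟨u k, hune, heig k⟩
        have hsq : 0 ≤ c k ^ 2 := sq_nonneg _
        nlinarith
    have hfinal : lam2 * (δ ⬝ᵥ δ) ≤ δ ⬝ᵥ (L *ᵥ δ) := by
      rw [hdd, hdL, Finset.mul_sum]
      exact Finset.sum_le_sum fun k _ => hkey k
    nlinarith [hfinal, hγ1]
end
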